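/- If X_1,…,X_n are independent random variables with a_i ≤ X_i ≤ b_i almost surely, and X̄_n = (X_1+⋯+X_n)/n, then for every ε > 0, P(|X̄_n − E[X̄_n]| ≥ ε) ≤ 2 exp(−2n²ε² / Σ_{i=1}^n (b_i−a_i)²). -/

import Mathlib

open MeasureTheory ProbabilityTheory Filter Set

open Real


lemma hoeffding_analytic {p : ℝ} (hp0 : 0 ≤ p) (hp1 : p ≤ 1) (u : ℝ) :
    (1 - p) * exp (-p * u) + p * exp ((1 - p) * u) ≤ exp (u ^ 2 / 8) := by
  set D : ℝ → ℝ := fun v => 1 - p + p * exp v with hD_def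
  have hDpos : ∀ v, 0 < D v := by
    intro v
    rcases lt_or_eq_of_le hp1 with h | h
    · have : 0 < 1 - p := by linarith
      have : 0 ≤ p * exp v := mul_nonneg hp0 (exp_pos v).le
      simp only [hD_def]; linarith
    · simp only [hD_def, h]; simpa using exp_pos v
  set h : ℝ → ℝ := fun v => v ^ 2 / 8 + p * v - log (D v) with hh_def
  set h' : ℝ → ℝ := fun v => v / 4 + p - p * exp v / D v with hh'_def
  have hDderiv : ∀ v, HasDerivAt D (p * exp v) v := by
    intro v
    exact ((Real.hasDerivAt_exp v).const_mul p).const_add (1 - p)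
  have hd1 : ∀ v, HasDerivAt h (h' v) v := by
    intro v
    have hlog : HasDerivAt (fun w => log (D w)) (p * exp v / D v) v :=
      (hDderiv v).log (hDpos v).ne'
    have h1 : HasDerivAt (fun w => w ^ 2 / 8 + p * w) (v / 4 + p) v := by
      have : HasDerivAt (fun w : ℝ => w ^ 2 / 8 + p * w) (2 * v ^ 1 / 8 + p * 1) v :=
        ((hasDerivAt_pow 2 v).div_const 8).add ((hasDerivAt_id v).const_mul p)
      convert this using 1; ring
    exact h1.sub hlog
  have hd2 : ∀ v, HasDerivAt h' (1 / 4 - p * (1 - p) * exp v / (D v) ^ 2) v := by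
    intro v
    have hq : HasDerivAt (fun w => p * exp w / D w)
        ((p * exp v * D v - p * exp v * (p * exp v)) / (D v) ^ 2) v :=
      ((Real.hasDerivAt_exp v).const_mul p).div (hDderiv v) (hDpos v).ne'
    have h1 : HasDerivAt (fun w => w / 4 + p) (1 / 4) v := by
      simpa using (hasDerivAt_id v).div_const 4 |>.add_const p
    have := h1.sub hq
    have hD := (hDpos v).ne'
    rw [show p * exp v * D v - p * exp v * (p * exp v) = p * (1 - p) * exp v by simp only [hD_def]; ring] at this
    exact this
  have hh'0 : h' 0 = 0 := by simp [hh'_def, hD_def]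
  have hh'mono : Monotone h' := by
    refine monotone_of_deriv_nonneg (fun v => (hd2 v).differentiableAt) ?_
    intro v
    rw [(hd2 v).deriv]
    have hD2 : (0:ℝ) < (D v) ^ 2 := pow_pos (hDpos v) 2
    have key : p * (1 - p) * exp v ≤ 1 / 4 * (D v) ^ 2 := by
      have h1 := sq_nonneg ((1 - p) - p * exp v)
      simp only [hD_def]
      nlinarith [exp_pos v]
    rw [sub_nonneg, div_le_iff₀ hD2]
    exact key
  have hh0 : h 0 = 0 := by simp [hh_def, hD_def]
  have hhnonneg : ∀ v, 0 ≤ h v := by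
    intro v
    rcases le_total 0 v with hv | hv
    · have hmono : MonotoneOn h (Ici (0:ℝ)) := by
        refine monotoneOn_of_deriv_nonneg (convex_Ici 0)
          (Continuous.continuousOn (by
            have : Differentiable ℝ h := fun w => (hd1 w).differentiableAt
            exact this.continuous)) (fun w _ => (hd1 w).differentiableAt.differentiableWithinAt)
          ?_
        intro w hw
        rw [(hd1 w).deriv]
        rw [interior_Ici] at hw
        have := hh'mono (le_of_lt hw)
        rw [hh'0] at this
        exact this
      have := hmono (self_mem_Ici) hv hv
      rwa [hh0] at this
    · have hanti : AntitoneOn h (Iic (0:ℝ)) := by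
        refine antitoneOn_of_deriv_nonpos (convex_Iic 0)
          (Continuous.continuousOn (by
            have : Differentiable ℝ h := fun w => (hd1 w).differentiableAt
            exact this.continuous)) (fun w _ => (hd1 w).differentiableAt.differentiableWithinAt)
          ?_
        intro w hw
        rw [(hd1 w).deriv]
        rw [interior_Iic] at hw
        have := hh'mono (le_of_lt hw)
        rw [hh'0] at this
        exact this
      have := hanti hv self_mem_Iic hv
      rwa [hh0] at this
  have key := hhnonneg u
  have hDu : D u ≤ exp (u ^ 2 / 8 + p * u) := by
    have : log (D u) ≤ u ^ 2 / 8 + p * u := by simp only [hh_def] at key; linarith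
    calc D u = exp (log (D u)) := (exp_log (hDpos u)).symm
    _ ≤ _ := exp_le_exp.mpr this
  have heq : (1 - p) * exp (-p * u) + p * exp ((1 - p) * u) = exp (-p * u) * D u := by
    simp only [hD_def]
    have he : exp ((1 - p) * u) = exp (-p * u) * exp u := by
      rw [← exp_add]; ring_nf
    rw [he]; ring
  rw [heq]
  calc exp (-p * u) * D u ≤ exp (-p * u) * exp (u ^ 2 / 8 + p * u) := by
        exact mul_le_mul_of_nonneg_left hDu (exp_pos _).le
  _ = exp (u ^ 2 / 8) := by rw [← exp_add]; ring_nf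


lemma integrable_exp_mul_of_bounded {Ω : Type*} [MeasurableSpace Ω] {μ : Measure Ω}
    [IsProbabilityMeasure μ] {X : Ω → ℝ} (hX : Measurable X) {a b : ℝ}
    (hab : ∀ᵐ ω ∂μ, X ω ∈ Icc a b) (t : ℝ) :
    Integrable (fun ω => exp (t * X ω)) μ := by
  refine Integrable.mono' (integrable_const (max (exp (t * a)) (exp (t * b))))
    ((hX.const_mul t).exp.aestronglyMeasurable) ?_
  filter_upwards [hab] with ω hω
  rw [Real.norm_eq_abs, abs_of_pos (exp_pos _)]
  rcases le_total 0 t with ht | ht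
  · exact le_max_of_le_right (exp_le_exp.mpr (mul_le_mul_of_nonneg_left hω.2 ht))
  · exact le_max_of_le_left (exp_le_exp.mpr (mul_le_mul_of_nonpos_left hω.1 ht))

lemma integrable_of_bounded {Ω : Type*} [MeasurableSpace Ω] {μ : Measure Ω}
    [IsProbabilityMeasure μ] {X : Ω → ℝ} (hX : Measurable X) {a b : ℝ}
    (hab : ∀ᵐ ω ∂μ, X ω ∈ Icc a b) : Integrable X μ := by
  refine Integrable.mono' (integrable_const (max |a| |b|)) hX.aestronglyMeasurable ?_
  filter_upwards [hab] with ω hω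
  exact abs_le_max_abs_abs hω.1 hω.2

lemma hoeffding_mgf {Ω : Type*} [MeasurableSpace Ω] (μ : Measure Ω)
    [IsProbabilityMeasure μ] {X : Ω → ℝ} (hX : Measurable X) {a b : ℝ}
    (hab : ∀ᵐ ω ∂μ, X ω ∈ Icc a b) (hmean : μ[X] = 0) (t : ℝ) :
    mgf X μ t ≤ exp (t ^ 2 * (b - a) ^ 2 / 8) := by
  have hint : Integrable X μ := integrable_of_bounded hX hab
  have ha0 : a ≤ 0 := by
    have : μ[fun _ => a] ≤ μ[X] :=
      integral_mono_ae (integrable_const a) hint (hab.mono fun ω h => h.1)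
    simpa [hmean] using this
  have hb0 : 0 ≤ b := by
    have : μ[X] ≤ μ[fun _ => b] :=
      integral_mono_ae hint (integrable_const b) (hab.mono fun ω h => h.2)
    simpa [hmean] using this
  rcases lt_or_ge a b with hlt | hge
  · -- main case
    have hba : 0 < b - a := by linarith
    set p : ℝ := -a / (b - a) with hp_def
    have hp0 : 0 ≤ p := div_nonneg (by linarith) hba.le
    have hp1 : p ≤ 1 := by rw [div_le_one hba]; linarith
    have hne : b - a ≠ 0 := sub_ne_zero.mpr hlt.ne'
    set c : ℝ := exp (t * a) with hc_def
    set d : ℝ := exp (t * b) with hd_def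
    -- pointwise convexity bound
    have hpt : ∀ᵐ ω ∂μ, exp (t * X ω) ≤
        (b * c - a * d) / (b - a) + X ω * ((d - c) / (b - a)) := by
      filter_upwards [hab] with ω hω
      have hl : (0:ℝ) ≤ (b - X ω) / (b - a) := div_nonneg (by linarith [hω.2]) hba.le
      have hr : (0:ℝ) ≤ (X ω - a) / (b - a) := div_nonneg (by linarith [hω.1]) hba.le
      have hsum : (b - X ω) / (b - a) + (X ω - a) / (b - a) = 1 := by
        field_simp
        ring
      have hconv := convexOn_exp.2 (Set.mem_univ (t * a)) (Set.mem_univ (t * b)) hl hr hsum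
      simp only [smul_eq_mul] at hconv
      have harg : (b - X ω) / (b - a) * (t * a) + (X ω - a) / (b - a) * (t * b) = t * X ω := by
        field_simp
        ring
      rw [harg] at hconv
      refine hconv.trans_eq ?_
      field_simp
      simp only [hc_def, hd_def, mul_comm t a, mul_comm t b]; ring
    have hintexp : Integrable (fun ω => exp (t * X ω)) μ :=
      integrable_exp_mul_of_bounded hX hab t
    have hintRHS : Integrable (fun ω => (b * c - a * d) / (b - a) + X ω * ((d - c) / (b - a))) μ :=
      (integrable_const _).add (hint.mul_const _)
    have h1 : mgf X μ t ≤ (b * c - a * d) / (b - a) := by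
      have := integral_mono_ae hintexp hintRHS hpt
      rw [integral_add (integrable_const _) (hint.mul_const _), integral_const,
        integral_mul_const, hmean] at this
      simpa [mgf] using this
    have h2 : (b * c - a * d) / (b - a) = (1 - p) * c + p * d := by
      rw [hp_def]; field_simp; ring
    set u : ℝ := t * (b - a) with hu_def
    have h3 : t * a = -p * u := by
      rw [hp_def, hu_def]; field_simp
    have h4 : t * b = (1 - p) * u := by
      rw [hp_def, hu_def]; field_simp; ring
    have h5 : u ^ 2 / 8 = t ^ 2 * (b - a) ^ 2 / 8 := by rw [hu_def]; ring
    calc mgf X μ t ≤ (1 - p) * c + p * d := h1.trans_eq h2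
      _ = (1 - p) * exp (-p * u) + p * exp ((1 - p) * u) := by rw [hc_def, hd_def, h3, h4]
      _ ≤ exp (u ^ 2 / 8) := hoeffding_analytic hp0 hp1 u
      _ = _ := by rw [h5]
  · -- degenerate: a = b = 0, X = 0 a.e.
    have hae : ∀ᵐ ω ∂μ, X ω = 0 := by
      filter_upwards [hab] with ω hω
      have := hω.1; have := hω.2
      nlinarith [hω.1, hω.2]
    have : mgf X μ t = 1 := by
      rw [mgf]
      rw [integral_congr_ae (g := fun _ => (1:ℝ)) (by filter_upwards [hae] with ω h; simp [h])]
      simp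
    rw [this]
    exact one_le_exp (by positivity)


/-- Hoeffding's inequality: if `X 1, …, X n` are independent with
`a i ≤ X i ≤ b i` a.s., then for every `ε > 0`,
`P(|X̄ - E X̄| ≥ ε) ≤ 2 exp (-2 n² ε² / ∑ (b i - a i)²)`. -/
theorem stmt4 {Ω : Type*} [MeasurableSpace Ω] (μ : Measure Ω) [IsProbabilityMeasure μ]
    (n : ℕ) (hn : 0 < n) (X : Fin n → Ω → ℝ) (a b : Fin n → ℝ)
    (hmeas : ∀ i, Measurable (X i))
    (hindep : iIndepFun X μ)
    (hbound : ∀ i, ∀ᵐ ω ∂μ, X i ω ∈ Icc (a i) (b i))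
    (ε : ℝ) (hε : 0 < ε) :
    (μ {ω | ε ≤ |(∑ i, X i ω) / n - μ[fun ω => (∑ i, X i ω) / n]|}).toReal ≤
      2 * Real.exp (-(2 * n ^ 2 * ε ^ 2) / ∑ i, (b i - a i) ^ 2) := by
  have hnR : (0:ℝ) < n := Nat.cast_pos.mpr hn
  have hXint : ∀ i, Integrable (X i) μ := fun i => integrable_of_bounded (hmeas i) (hbound i)
  set Z : Fin n → Ω → ℝ := fun i ω => X i ω - μ[X i] with hZ_def
  have hZmeas : ∀ i, Measurable (Z i) := fun i => (hmeas i).sub measurable_const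
  have hZindep : iIndepFun Z μ := by
    have h := hindep.comp (g := fun i (x : ℝ) => x - μ[X i])
      (fun i => measurable_id.sub measurable_const)
    exact h
  have hZbound : ∀ i, ∀ᵐ ω ∂μ, Z i ω ∈ Icc (a i - μ[X i]) (b i - μ[X i]) := fun i =>
    (hbound i).mono fun ω h => ⟨by simp only [hZ_def]; linarith [h.1], by
      simp only [hZ_def]; linarith [h.2]⟩
  have hZmean : ∀ i, μ[Z i] = 0 := by
    intro i
    simp only [hZ_def]
    rw [integral_sub (hXint i) (integrable_const _), integral_const]
    simp
  have hZmgf : ∀ (i) (t : ℝ), mgf (Z i) μ t ≤ exp (t ^ 2 * (b i - a i) ^ 2 / 8) := by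
    intro i t
    have := hoeffding_mgf μ (hZmeas i) (hZbound i) (hZmean i) t
    have hgap : (b i - μ[X i]) - (a i - μ[X i]) = b i - a i := by ring
    rwa [hgap] at this
  set C : ℝ := ∑ i, (b i - a i) ^ 2 with hC_def
  have hC0 : 0 ≤ C := Finset.sum_nonneg fun i _ => sq_nonneg _
  set S : Ω → ℝ := ∑ i, Z i with hS_def
  have hSapp : ∀ ω, S ω = ∑ i, (X i ω - μ[X i]) := by
    intro ω; simp [hS_def, hZ_def, Finset.sum_apply]
  have hEint : μ[fun ω => (∑ i, X i ω) / (n:ℝ)] = (∑ i, μ[X i]) / (n:ℝ) := by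
    beta_reduce
    rw [integral_div, integral_finset_sum _ fun i _ => hXint i]
  have hEq : ∀ ω, (∑ i, X i ω) / n - μ[fun ω => (∑ i, X i ω) / n] = S ω / n := by
    intro ω
    rw [hEint, div_sub_div_same, hSapp, Finset.sum_sub_distrib]
  -- integrability of exp (t * S)
  have hintS : ∀ t : ℝ, Integrable (fun ω => exp (t * S ω)) μ := fun t =>
    hZindep.integrable_exp_mul_sum hZmeas fun i _ =>
      integrable_exp_mul_of_bounded (hZmeas i) (hZbound i) t
  have hmgfS : ∀ t : ℝ, mgf S μ t ≤ exp (t ^ 2 * C / 8) := by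
    intro t
    rw [hS_def, hZindep.mgf_sum hZmeas]
    calc ∏ i, mgf (Z i) μ t ≤ ∏ i, exp (t ^ 2 * (b i - a i) ^ 2 / 8) :=
          Finset.prod_le_prod (fun i _ => mgf_nonneg) fun i _ => hZmgf i t
      _ = exp (∑ i, t ^ 2 * (b i - a i) ^ 2 / 8) := by rw [exp_sum]
      _ = exp (t ^ 2 * C / 8) := by rw [hC_def, Finset.mul_sum, Finset.sum_div]
  -- event inclusion
  have hsub : {ω | ε ≤ |(∑ i, X i ω) / n - μ[fun ω => (∑ i, X i ω) / n]|} ⊆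
      {ω | (n:ℝ) * ε ≤ S ω} ∪ {ω | S ω ≤ -((n:ℝ) * ε)} := by
    intro ω hω
    rw [Set.mem_setOf_eq, hEq ω] at hω
    have habs : (n:ℝ) * ε ≤ |S ω| := by
      rw [abs_div, abs_of_pos hnR] at hω
      rw [mul_comm]
      exact (le_div_iff₀ hnR).mp hω
    rcases le_abs.mp habs with h | h
    · exact Or.inl h
    · exact Or.inr (by simpa [Set.mem_setOf_eq] using by linarith)
  have hmeasle : (μ {ω | ε ≤ |(∑ i, X i ω) / n - μ[fun ω => (∑ i, X i ω) / n]|}).toReal ≤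
      (μ {ω | (n:ℝ) * ε ≤ S ω}).toReal + (μ {ω | S ω ≤ -((n:ℝ) * ε)}).toReal := by
    rw [← ENNReal.toReal_add (measure_ne_top μ _) (measure_ne_top μ _)]
    exact ENNReal.toReal_mono
      (ENNReal.add_ne_top.mpr ⟨measure_ne_top μ _, measure_ne_top μ _⟩)
      ((measure_mono hsub).trans (measure_union_le _ _))
  by_cases hC : C = 0
  · -- degenerate case: RHS = 2
    have h1 : (μ {ω | ε ≤ |(∑ i, X i ω) / n - μ[fun ω => (∑ i, X i ω) / n]|}).toReal ≤ 1 := by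
      rw [← ENNReal.toReal_one]
      exact ENNReal.toReal_mono ENNReal.one_ne_top (prob_le_one)
    rw [hC, div_zero, exp_zero]
    linarith
  · have hCpos : 0 < C := lt_of_le_of_ne hC0 (Ne.symm hC)
    set t : ℝ := 4 * n * ε / C with ht_def
    have htpos : 0 < t := by positivity
    have harith : -t * ((n:ℝ) * ε) + t ^ 2 * C / 8 = -(2 * (n:ℝ) ^ 2 * ε ^ 2) / C := by
      rw [ht_def]; field_simp; ring
    have hup : (μ {ω | (n:ℝ) * ε ≤ S ω}).toReal ≤ exp (-(2 * (n:ℝ) ^ 2 * ε ^ 2) / C) := by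
      calc (μ {ω | (n:ℝ) * ε ≤ S ω}).toReal ≤ exp (-t * ((n:ℝ) * ε)) * mgf S μ t :=
            measure_ge_le_exp_mul_mgf _ htpos.le (hintS t)
        _ ≤ exp (-t * ((n:ℝ) * ε)) * exp (t ^ 2 * C / 8) :=
            mul_le_mul_of_nonneg_left (hmgfS t) (exp_pos _).le
        _ = _ := by rw [← exp_add, harith]
    have hlow : (μ {ω | S ω ≤ -((n:ℝ) * ε)}).toReal ≤ exp (-(2 * (n:ℝ) ^ 2 * ε ^ 2) / C) := by
      calc (μ {ω | S ω ≤ -((n:ℝ) * ε)}).toReal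
          ≤ exp (-(-t) * -((n:ℝ) * ε)) * mgf S μ (-t) :=
            measure_le_le_exp_mul_mgf _ (neg_nonpos.mpr htpos.le) (hintS (-t))
        _ ≤ exp (-t * ((n:ℝ) * ε)) * exp ((-t) ^ 2 * C / 8) := by
            rw [show -(-t) * -((n:ℝ) * ε) = -t * ((n:ℝ) * ε) by ring]
            exact mul_le_mul_of_nonneg_left (hmgfS (-t)) (exp_pos _).le
        _ = _ := by rw [← exp_add, show (-t)^2 = t^2 by ring, harith]
    calc _ ≤ _ := hmeasle
      _ ≤ 2 * exp (-(2 * (n:ℝ) ^ 2 * ε ^ 2) / C) := by linarith
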